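/- Let a₁, a₂ be coprime positive integers with a₁ < a₂, and let x be a positive integer with x < a₁·a₂. Then x can be written as α·a₁ − β·a₂ or α·a₂ − β·a₁ with 0 < α, 0 < β (integers, α < a₂ resp. α < a₁, β < a₁ resp. β < a₂) if and only if x is not representable as a nonnegative integer combination of a₁ and a₂. -/
import Mathlib


theorem stmt_1 (a₁ a₂ : ℤ) (h₁ : 1 ≤ a₁) (h₂ : 1 ≤ a₂) (hlt : a₁ < a₂)
    (hcop : IsCoprime a₁ a₂) (x : ℤ) (hx : 0 < x) (hxlt : x < a₁ * a₂) :
    ((∃ α β : ℤ, 0 < α ∧ α < a₂ ∧ 0 < β ∧ β < a₁ ∧ x = α * a₁ - β * a₂) ∨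
     (∃ α β : ℤ, 0 < α ∧ α < a₁ ∧ 0 < β ∧ β < a₂ ∧ x = α * a₂ - β * a₁)) ↔
    ¬ ∃ l₁ l₂ : ℕ, x = (l₁ : ℤ) * a₁ + (l₂ : ℤ) * a₂ := by
  constructor
  · rintro (⟨α, β, hα0, hαlt, hβ0, hβlt, hxe⟩ | ⟨α, β, hα0, hαlt, hβ0, hβlt, hxe⟩)
      ⟨l₁, l₂, hrep⟩
    · have hl₁ : (0:ℤ) ≤ l₁ := Int.natCast_nonneg l₁
      have hl₂ : (0:ℤ) ≤ l₂ := Int.natCast_nonneg l₂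
      have key : (α - l₁) * a₁ = (β + l₂) * a₂ := by linarith [hxe, hrep]
      have hdvd : a₂ ∣ (α - l₁) :=
        hcop.symm.dvd_of_dvd_mul_right ⟨β + l₂, by linarith [key]⟩
      have hpos : 0 < (α - l₁) * a₁ := by nlinarith
      have h1 : 0 < α - l₁ := by nlinarith
      have := Int.le_of_dvd h1 hdvd
      linarith
    · have hl₁ : (0:ℤ) ≤ l₁ := Int.natCast_nonneg l₁
      have hl₂ : (0:ℤ) ≤ l₂ := Int.natCast_nonneg l₂
      have key : (α - l₂) * a₂ = (β + l₁) * a₁ := by linarith [hxe, hrep]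
      have hdvd : a₁ ∣ (α - l₂) :=
        hcop.dvd_of_dvd_mul_right ⟨β + l₁, by linarith [key]⟩
      have hpos : 0 < (α - l₂) * a₂ := by nlinarith
      have h1 : 0 < α - l₂ := by nlinarith
      have := Int.le_of_dvd h1 hdvd
      linarith
  · intro hnrep
    obtain ⟨u, v, huv⟩ := hcop
    have ha₂ : (0:ℤ) < a₂ := by linarith
    set α := (x * u) % a₂ with hα
    have hα0 : 0 ≤ α := Int.emod_nonneg _ (by linarith)
    have hαlt : α < a₂ := Int.emod_lt_of_pos _ ha₂
    set c := (x * u) / a₂ * a₁ + x * v with hc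
    have hdiv := Int.emod_add_mul_ediv (x * u) a₂
    have hxe : x = α * a₁ + c * a₂ := by
      rw [hα, hc]
      linear_combination (-x) * huv - a₁ * hdiv
    rcases le_or_gt 0 c with hc0 | hc0
    · exfalso
      exact hnrep ⟨α.toNat, c.toNat, by
        rw [Int.toNat_of_nonneg hα0, Int.toNat_of_nonneg hc0]; exact hxe⟩
    · left
      refine ⟨α, -c, ?_, hαlt, by linarith, ?_, by linarith [hxe]⟩
      · nlinarith
      · nlinarith
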